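/- Let v, w in Z^2 be primitive and linearly independent, and let p = |det(v,w)|. If α, β are integers with α·v_1 + β·v_2 = 1, then q := p minus the remainder of (α·w_1 + β·w_2) modulo p satisfies: there exists A in GL_2(Z) with A·v = (1,0) and A·w = (-q, p) (interpreting q = p as q = 0 when the remainder is 0). -/

import Mathlib

/-- Let `v, w ∈ ℤ²` be primitive and linearly independent, `p = |det(v,w)|`.
If `α·v₀ + β·v₁ = 1`, then `q := p - ((α·w₀ + β·w₁) mod p)` (interpreted as `0` when the
remainder is `0`) satisfies: there is `A ∈ GL₂(ℤ)` with `A·v = (1,0)` and `A·w = (-q,p)`. -/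
theorem stmt_1 (v w : Fin 2 → ℤ)
    (hv : IsCoprime (v 0) (v 1)) (hw : IsCoprime (w 0) (w 1))
    (α β : ℤ) (hαβ : α * v 0 + β * v 1 = 1)
    (p : ℤ) (hp : p = |v 0 * w 1 - v 1 * w 0|) (hp0 : p ≠ 0)
    (q : ℤ)
    (hq : q = if (α * w 0 + β * w 1) % p = 0 then 0 else p - (α * w 0 + β * w 1) % p) :
    ∃ A : Matrix (Fin 2) (Fin 2) ℤ, (A.det = 1 ∨ A.det = -1) ∧
      A.mulVec v = ![1, 0] ∧ A.mulVec w = ![-q, p] := by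
  set m := α * w 0 + β * w 1 with hm
  set d := v 0 * w 1 - v 1 * w 0 with hd
  have hd0 : d ≠ 0 := by
    intro h; apply hp0; rw [hp, h]; simp
  have hpd : p = d ∨ p = -d := by
    rw [hp]; rcases abs_cases d with ⟨h, _⟩ | ⟨h, _⟩
    · left; omega
    · right; omega
  have hdvd : p ∣ m + q := by
    by_cases h : m % p = 0
    · rw [if_pos h] at hq
      have := Int.dvd_of_emod_eq_zero h
      simpa [hq] using this
    · rw [if_neg h] at hq
      refine ⟨1 + m / p, ?_⟩
      rw [hq, Int.emod_def]; ring
  have hddvd : d ∣ m + q := by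
    rcases hpd with h | h
    · rwa [h] at hdvd
    · rw [h] at hdvd; exact (neg_dvd.mp hdvd)
  set k : ℤ := -((m + q) / d) with hkdef
  have hk : k * d = -(m + q) := by
    rw [hkdef, neg_mul, Int.ediv_mul_cancel hddvd]
  set s : ℤ := if p = d then 1 else -1 with hsdef
  have hs : s * d = p := by
    rw [hsdef]; split_ifs with h
    · simp [h]
    · rcases hpd with h' | h'
      · exact absurd h' h
      · rw [h']; ring
  have hs1 : s = 1 ∨ s = -1 := by
    rw [hsdef]; split_ifs <;> simp
  refine ⟨![![α - k * v 1, β + k * v 0], ![-(s * v 1), s * v 0]], ?_, ?_, ?_⟩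
  · have hdet : Matrix.det ![![α - k * v 1, β + k * v 0], ![-(s * v 1), s * v 0]] = s := by
      erw [Matrix.det_fin_two]; simp
      linear_combination s * hαβ
    rw [hdet]; exact hs1
  · funext i
    fin_cases i <;>
      simp [Matrix.mulVec, dotProduct, Fin.sum_univ_succ, Matrix.vecHead, Matrix.vecTail] <;> ring_nf <;>
      linear_combination hαβ
  · funext i
    fin_cases i <;>
      simp [Matrix.mulVec, dotProduct, Fin.sum_univ_succ, Matrix.vecHead, Matrix.vecTail]
    · linear_combination w 0 * hαβ * 0 + hk
    · linear_combination hs
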